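/- Let p, q ≥ 1 with n = p + q + 1 and λ > 1, and let D_λ be the linear automorphism of ℝ^{p+1} × ℝ^{q+1} that multiplies the first factor by λ and the second factor by λ⁻¹. The ℤ-action on Ω := S^n ∖ (S^p ∪ S^q) defined by m • v := D_λ^m v / ‖D_λ^m v‖ is well-defined, free (m • v = v implies m = 0), and properly discontinuous (for all compact subsets K, L of Ω, the set of m ∈ ℤ with (m • K) ∩ L ≠ ∅ is finite). -/

import Mathlib

noncomputable section

open Set

/-- The great `p`-sphere `S^p`. -/
def greatSphereP (n p : ℕ) : Set (EuclideanSpace ℝ (Fin (n + 1))) :=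
  {v | ‖v‖ = 1 ∧ ∀ k : Fin (n + 1), p + 1 ≤ (k : ℕ) → v k = 0}

/-- The complementary great `q`-sphere `S^q`. -/
def greatSphereQ (n p : ℕ) : Set (EuclideanSpace ℝ (Fin (n + 1))) :=
  {v | ‖v‖ = 1 ∧ ∀ k : Fin (n + 1), (k : ℕ) < p + 1 → v k = 0}

/-- `Ω := S^n ∖ (S^p ∪ S^q)` with its subspace topology. -/
def Omega (n p : ℕ) : Set (EuclideanSpace ℝ (Fin (n + 1))) :=
  {v | ‖v‖ = 1} \ (greatSphereP n p ∪ greatSphereQ n p)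

/-- `D_λ^m`: the linear automorphism multiplying the `ℝ^{p+1}`-factor by `λ^m`
and the `ℝ^{q+1}`-factor by `λ^{-m}`. -/
def Dmap (n p : ℕ) (lam : ℝ) (m : ℤ) (v : EuclideanSpace ℝ (Fin (n + 1))) :
    EuclideanSpace ℝ (Fin (n + 1)) :=
  WithLp.toLp 2 (fun k : Fin (n + 1) => (if (k : ℕ) < p + 1 then lam ^ m else lam ^ (-m)) * v k)

/-- The projectivized action `m • v := D_λ^m v / ‖D_λ^m v‖`. -/
def normAct (n p : ℕ) (lam : ℝ) (m : ℤ) (v : EuclideanSpace ℝ (Fin (n + 1))) :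
    EuclideanSpace ℝ (Fin (n + 1)) :=
  ‖Dmap n p lam m v‖⁻¹ • Dmap n p lam m v

def a2 (n p : ℕ) (v : EuclideanSpace ℝ (Fin (n + 1))) : ℝ :=
  ∑ k : Fin (n + 1), if (k : ℕ) < p + 1 then (v k) ^ 2 else 0

def b2 (n p : ℕ) (v : EuclideanSpace ℝ (Fin (n + 1))) : ℝ :=
  ∑ k : Fin (n + 1), if (k : ℕ) < p + 1 then 0 else (v k) ^ 2

variable {n p : ℕ} {lam : ℝ}

lemma a2_nonneg (v) : 0 ≤ a2 n p v :=
  Finset.sum_nonneg fun k _ => by split <;> positivity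

lemma b2_nonneg (v) : 0 ≤ b2 n p v :=
  Finset.sum_nonneg fun k _ => by split <;> positivity

lemma norm_sq_eq (v : EuclideanSpace ℝ (Fin (n + 1))) : ‖v‖ ^ 2 = a2 n p v + b2 n p v := by
  rw [EuclideanSpace.norm_eq, Real.sq_sqrt (by positivity)]
  unfold a2 b2
  rw [← Finset.sum_add_distrib]
  refine Finset.sum_congr rfl fun k _ => ?_
  split <;> simp [Real.norm_eq_abs, sq_abs]

lemma a2_eq_zero_iff (v) : a2 n p v = 0 ↔ ∀ k : Fin (n + 1), (k : ℕ) < p + 1 → v k = 0 := by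
  rw [a2, Finset.sum_eq_zero_iff_of_nonneg (fun k _ => by split <;> positivity)]
  constructor
  · intro h k hk
    have := h k (Finset.mem_univ k)
    rw [if_pos hk] at this
    exact pow_eq_zero_iff (n := 2) (by norm_num) |>.mp this
  · intro h k _
    split
    · simp [h k ‹_›]
    · rfl

lemma b2_eq_zero_iff (v) : b2 n p v = 0 ↔ ∀ k : Fin (n + 1), ¬ (k : ℕ) < p + 1 → v k = 0 := by
  rw [b2, Finset.sum_eq_zero_iff_of_nonneg (fun k _ => by split <;> positivity)]
  constructor
  · intro h k hk
    have := h k (Finset.mem_univ k)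
    rw [if_neg hk] at this
    exact pow_eq_zero_iff (n := 2) (by norm_num) |>.mp this
  · intro h k _
    split
    · rfl
    · simp [h k ‹_›]

lemma mem_Omega_iff (v) :
    v ∈ Omega n p ↔ ‖v‖ = 1 ∧ 0 < a2 n p v ∧ 0 < b2 n p v := by
  simp only [Omega, greatSphereP, greatSphereQ, Set.mem_diff, Set.mem_union,
    Set.mem_setOf_eq, not_or]
  constructor
  · rintro ⟨h1, h2, h3⟩
    refine ⟨h1, ?_, ?_⟩
    · rcases (a2_nonneg v).lt_or_eq with h | h
      · exact h
      · exact absurd ⟨h1, fun k hk => (a2_eq_zero_iff v).mp h.symm k hk⟩ h3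
    · rcases (b2_nonneg v).lt_or_eq with h | h
      · exact h
      · refine absurd ⟨h1, fun k hk => (b2_eq_zero_iff v).mp h.symm k ?_⟩ h2
        omega
  · rintro ⟨h1, h2, h3⟩
    refine ⟨h1, ?_, ?_⟩
    · rintro ⟨-, h⟩
      have : b2 n p v = 0 := (b2_eq_zero_iff v).mpr fun k hk => h k (by omega)
      exact absurd this h3.ne'
    · rintro ⟨-, h⟩
      have : a2 n p v = 0 := (a2_eq_zero_iff v).mpr fun k hk => h k hk
      exact absurd this h2.ne'

lemma Dmap_apply (m : ℤ) (v) (k : Fin (n + 1)) :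
    Dmap n p lam m v k = (if (k : ℕ) < p + 1 then lam ^ m else lam ^ (-m)) * v k := rfl

lemma a2_Dmap (m : ℤ) (v) : a2 n p (Dmap n p lam m v) = (lam ^ m) ^ 2 * a2 n p v := by
  unfold a2
  rw [Finset.mul_sum]
  refine Finset.sum_congr rfl fun k _ => ?_
  rw [Dmap_apply]
  split <;> ring

lemma b2_Dmap (m : ℤ) (v) : b2 n p (Dmap n p lam m v) = (lam ^ (-m)) ^ 2 * b2 n p v := by
  unfold b2
  rw [Finset.mul_sum]
  refine Finset.sum_congr rfl fun k _ => ?_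
  rw [Dmap_apply]
  split <;> ring

lemma a2_smul (c : ℝ) (v) : a2 n p (c • v) = c ^ 2 * a2 n p v := by
  unfold a2
  rw [Finset.mul_sum]
  refine Finset.sum_congr rfl fun k _ => ?_
  have : (c • v) k = c * v k := rfl
  rw [this]; split <;> ring

lemma b2_smul (c : ℝ) (v) : b2 n p (c • v) = c ^ 2 * b2 n p v := by
  unfold b2
  rw [Finset.mul_sum]
  refine Finset.sum_congr rfl fun k _ => ?_
  have : (c • v) k = c * v k := rfl
  rw [this]; split <;> ring

lemma norm_Dmap_pos (hlam : 1 < lam) (m : ℤ) {v} (hv : v ∈ Omega n p) :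
    0 < ‖Dmap n p lam m v‖ := by
  obtain ⟨h1, h2, h3⟩ := (mem_Omega_iff v).mp hv
  have hl : (0:ℝ) < lam := lt_trans one_pos hlam
  have : 0 < ‖Dmap n p lam m v‖ ^ 2 := by
    rw [norm_sq_eq, a2_Dmap, b2_Dmap]
    have h1 : (0:ℝ) < lam ^ m := zpow_pos hl m
    have h2' : (0:ℝ) < lam ^ (-m) := zpow_pos hl (-m)
    positivity
  nlinarith [norm_nonneg (Dmap n p lam m v)]

lemma normAct_mem (hlam : 1 < lam) (m : ℤ) {v} (hv : v ∈ Omega n p) :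
    normAct n p lam m v ∈ Omega n p := by
  obtain ⟨h1, h2, h3⟩ := (mem_Omega_iff v).mp hv
  have hl : (0:ℝ) < lam := lt_trans one_pos hlam
  have hN : 0 < ‖Dmap n p lam m v‖ := norm_Dmap_pos hlam m hv
  rw [mem_Omega_iff]
  refine ⟨?_, ?_, ?_⟩
  · rw [normAct, norm_smul, Real.norm_eq_abs, abs_inv, abs_of_pos hN,
      inv_mul_cancel₀ hN.ne']
  · rw [normAct, a2_smul, a2_Dmap]
    have := zpow_pos hl m
    positivity
  · rw [normAct, b2_smul, b2_Dmap]
    have := zpow_pos hl (-m)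
    positivity

lemma Dmap_zero (v : EuclideanSpace ℝ (Fin (n + 1))) : Dmap n p lam 0 v = v := by
  ext k
  rw [Dmap_apply]
  split <;> simp

lemma Dmap_Dmap (hlam : 1 < lam) (m₁ m₂ : ℤ) (v) :
    Dmap n p lam m₁ (Dmap n p lam m₂ v) = Dmap n p lam (m₁ + m₂) v := by
  have hl : lam ≠ 0 := (lt_trans one_pos hlam).ne'
  ext k
  rw [Dmap_apply, Dmap_apply, Dmap_apply]
  split
  · rw [← mul_assoc, ← zpow_add₀ hl]
  · rw [← mul_assoc, ← zpow_add₀ hl, neg_add]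

lemma Dmap_smul (c : ℝ) (m : ℤ) (v) :
    Dmap n p lam m (c • v) = c • Dmap n p lam m v := by
  ext k
  have h1 : (c • v) k = c * v k := rfl
  have h2 : (c • Dmap n p lam m v) k = c * Dmap n p lam m v k := rfl
  rw [Dmap_apply, h1, h2, Dmap_apply]
  ring

lemma normAct_zero {v} (hv : v ∈ Omega n p) : normAct n p lam 0 v = v := by
  have h1 := ((mem_Omega_iff v).mp hv).1
  rw [normAct, Dmap_zero, h1]
  simp

lemma normAct_add (hlam : 1 < lam) (m₁ m₂ : ℤ) {v} (hv : v ∈ Omega n p) :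
    normAct n p lam (m₁ + m₂) v = normAct n p lam m₁ (normAct n p lam m₂ v) := by
  have hN₂ : 0 < ‖Dmap n p lam m₂ v‖ := norm_Dmap_pos hlam m₂ hv
  have hN : 0 < ‖Dmap n p lam (m₁ + m₂) v‖ := norm_Dmap_pos hlam (m₁ + m₂) hv
  rw [normAct, normAct, normAct, Dmap_smul, Dmap_Dmap hlam, norm_smul, smul_smul,
    Real.norm_eq_abs, abs_inv, abs_of_pos hN₂]
  congr 1
  field_simp

lemma normAct_free (hlam : 1 < lam) (m : ℤ) {v} (hv : v ∈ Omega n p)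
    (h : normAct n p lam m v = v) : m = 0 := by
  obtain ⟨h1, h2, h3⟩ := (mem_Omega_iff v).mp hv
  have hl : (0:ℝ) < lam := lt_trans one_pos hlam
  have hN : 0 < ‖Dmap n p lam m v‖ := norm_Dmap_pos hlam m hv
  obtain ⟨k, hk, hvk⟩ : ∃ k : Fin (n + 1), (k : ℕ) < p + 1 ∧ v k ≠ 0 := by
    by_contra hc
    push_neg at hc
    exact h2.ne' ((a2_eq_zero_iff v).mpr hc)
  obtain ⟨j, hj, hvj⟩ : ∃ j : Fin (n + 1), ¬ (j : ℕ) < p + 1 ∧ v j ≠ 0 := by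
    by_contra hc
    push_neg at hc
    exact h3.ne' ((b2_eq_zero_iff v).mpr fun k hk => hc k (by omega))
  have hkv : ‖Dmap n p lam m v‖⁻¹ * (lam ^ m * v k) = v k := by
    have : normAct n p lam m v k = v k := by rw [h]
    rwa [normAct, PiLp.smul_apply, Dmap_apply, if_pos hk, smul_eq_mul] at this
  have hjv : ‖Dmap n p lam m v‖⁻¹ * (lam ^ (-m) * v j) = v j := by
    have : normAct n p lam m v j = v j := by rw [h]
    rwa [normAct, PiLp.smul_apply, Dmap_apply, if_neg hj, smul_eq_mul] at this
  have c1 : ‖Dmap n p lam m v‖⁻¹ * lam ^ m = 1 :=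
    mul_right_cancel₀ hvk (by rw [mul_assoc, one_mul]; exact hkv)
  have c2 : ‖Dmap n p lam m v‖⁻¹ * lam ^ (-m) = 1 :=
    mul_right_cancel₀ hvj (by rw [mul_assoc, one_mul]; exact hjv)
  have e1 : ‖Dmap n p lam m v‖ = lam ^ m := (inv_mul_eq_one₀ hN.ne').mp c1
  have e2 : ‖Dmap n p lam m v‖ = lam ^ (-m) := (inv_mul_eq_one₀ hN.ne').mp c2
  have : lam ^ m = lam ^ (-m) := e1.symm.trans e2
  have := zpow_right_injective₀ hl hlam.ne' this
  omega

lemma continuous_a2 : Continuous (a2 n p) := by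
  unfold a2
  refine continuous_finset_sum _ fun k _ => ?_
  by_cases h : (k : ℕ) < p + 1
  · simp only [if_pos h]
    exact ((EuclideanSpace.proj (𝕜 := ℝ) k).continuous).pow 2
  · simp only [if_neg h]
    exact continuous_const

lemma continuous_b2 : Continuous (b2 n p) := by
  unfold b2
  refine continuous_finset_sum _ fun k _ => ?_
  by_cases h : (k : ℕ) < p + 1
  · simp only [if_pos h]
    exact continuous_const
  · simp only [if_neg h]
    exact ((EuclideanSpace.proj (𝕜 := ℝ) k).continuous).pow 2

lemma a2_add_b2 {v} (hv : v ∈ Omega n p) : a2 n p v + b2 n p v = 1 := by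
  have h1 := ((mem_Omega_iff v).mp hv).1
  have := norm_sq_eq (n := n) (p := p) v
  rw [h1] at this
  linarith

lemma key_eq (m : ℤ) (v : EuclideanSpace ℝ (Fin (n + 1))) :
    (lam ^ m) ^ 2 * (a2 n p v * b2 n p (normAct n p lam m v)) =
    (lam ^ (-m)) ^ 2 * (b2 n p v * a2 n p (normAct n p lam m v)) := by
  rw [normAct, a2_smul, b2_smul, a2_Dmap, b2_Dmap]
  ring

lemma properly_disc (hlam : 1 < lam)
    (K L : Set (EuclideanSpace ℝ (Fin (n + 1)))) (hKΩ : K ⊆ Omega n p)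
    (hLΩ : L ⊆ Omega n p) (hK : IsCompact K) (hL : IsCompact L) :
    {m : ℤ | (normAct n p lam m '' K ∩ L).Nonempty}.Finite := by
  have hl : (0:ℝ) < lam := lt_trans one_pos hlam
  rcases K.eq_empty_or_nonempty with hKe | hKne
  · refine Set.Finite.subset Set.finite_empty ?_
    rintro m ⟨w, ⟨v, hvK, -⟩, -⟩
    rw [hKe] at hvK
    exact absurd hvK (Set.notMem_empty v)
  rcases L.eq_empty_or_nonempty with hLe | hLne
  · refine Set.Finite.subset Set.finite_empty ?_
    rintro m ⟨w, -, hwL⟩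
    rw [hLe] at hwL
    exact absurd hwL (Set.notMem_empty w)
  obtain ⟨xa, hxaK, hxa⟩ := hK.exists_isMinOn hKne (continuous_a2.continuousOn)
  obtain ⟨xb, hxbK, hxb⟩ := hK.exists_isMinOn hKne (continuous_b2.continuousOn)
  obtain ⟨ya, hyaL, hya⟩ := hL.exists_isMinOn hLne (continuous_a2.continuousOn)
  obtain ⟨yb, hybL, hyb⟩ := hL.exists_isMinOn hLne (continuous_b2.continuousOn)
  set ε₁ := a2 n p xa with hε₁def
  set ε₂ := b2 n p xb with hε₂def
  set δ₁ := a2 n p ya with hδ₁def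
  set δ₂ := b2 n p yb with hδ₂def
  have hε₁ : 0 < ε₁ := ((mem_Omega_iff xa).mp (hKΩ hxaK)).2.1
  have hε₂ : 0 < ε₂ := ((mem_Omega_iff xb).mp (hKΩ hxbK)).2.2
  have hδ₁ : 0 < δ₁ := ((mem_Omega_iff ya).mp (hLΩ hyaL)).2.1
  have hδ₂ : 0 < δ₂ := ((mem_Omega_iff yb).mp (hLΩ hybL)).2.2
  obtain ⟨M₁, hM₁⟩ := pow_unbounded_of_one_lt ((ε₁ * δ₂)⁻¹) hlam
  obtain ⟨M₂, hM₂⟩ := pow_unbounded_of_one_lt ((ε₂ * δ₁)⁻¹) hlam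
  refine Set.Finite.subset (Set.finite_Icc (-(M₂ : ℤ)) (M₁ : ℤ)) ?_
  rintro m ⟨w, ⟨v, hvK, rfl⟩, hwL⟩
  have hvΩ := hKΩ hvK
  have hwΩ := hLΩ hwL
  set w := normAct n p lam m v with hwdef
  have hεa : ε₁ ≤ a2 n p v := isMinOn_iff.mp hxa v hvK
  have hεb : ε₂ ≤ b2 n p v := isMinOn_iff.mp hxb v hvK
  have hδa : δ₁ ≤ a2 n p w := isMinOn_iff.mp hya w hwL
  have hδb : δ₂ ≤ b2 n p w := isMinOn_iff.mp hyb w hwL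
  have hsum_v := a2_add_b2 hvΩ
  have hsum_w := a2_add_b2 hwΩ
  have hub_av : a2 n p v ≤ 1 := by linarith [b2_nonneg (n := n) (p := p) v]
  have hub_bv : b2 n p v ≤ 1 := by linarith [a2_nonneg (n := n) (p := p) v]
  have hub_aw : a2 n p w ≤ 1 := by linarith [b2_nonneg (n := n) (p := p) w]
  have hub_bw : b2 n p w ≤ 1 := by linarith [a2_nonneg (n := n) (p := p) w]
  have key := key_eq (n := n) (p := p) (lam := lam) m v
  rw [← hwdef] at key
  have hAS : (lam ^ m) ^ 2 * (lam ^ (-m)) ^ 2 = 1 := by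
    rw [← mul_pow, ← zpow_add₀ hl.ne']
    simp
  have hpow1 : ((lam ^ m) ^ 2) ^ 2 = lam ^ (4 * m) := by
    rw [show (4 : ℤ) * m = m * (2 * 2) by ring, zpow_mul]
    norm_cast
    rw [pow_mul]
  have hpow2 : ((lam ^ (-m)) ^ 2) ^ 2 = lam ^ (-(4 * m)) := by
    rw [show -((4 : ℤ) * m) = -m * (2 * 2) by ring, zpow_mul]
    norm_cast
    rw [pow_mul]
  have eq1 : lam ^ (4 * m) * (a2 n p v * b2 n p w) = b2 n p v * a2 n p w := by
    rw [← hpow1]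
    calc ((lam ^ m) ^ 2) ^ 2 * (a2 n p v * b2 n p w)
        = (lam ^ m) ^ 2 * ((lam ^ m) ^ 2 * (a2 n p v * b2 n p w)) := by ring
      _ = (lam ^ m) ^ 2 * ((lam ^ (-m)) ^ 2 * (b2 n p v * a2 n p w)) := by rw [key]
      _ = ((lam ^ m) ^ 2 * (lam ^ (-m)) ^ 2) * (b2 n p v * a2 n p w) := by ring
      _ = b2 n p v * a2 n p w := by rw [hAS, one_mul]
  have eq2 : lam ^ (-(4 * m)) * (b2 n p v * a2 n p w) = a2 n p v * b2 n p w := by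
    rw [← hpow2]
    calc ((lam ^ (-m)) ^ 2) ^ 2 * (b2 n p v * a2 n p w)
        = (lam ^ (-m)) ^ 2 * ((lam ^ (-m)) ^ 2 * (b2 n p v * a2 n p w)) := by ring
      _ = (lam ^ (-m)) ^ 2 * ((lam ^ m) ^ 2 * (a2 n p v * b2 n p w)) := by rw [key]
      _ = ((lam ^ m) ^ 2 * (lam ^ (-m)) ^ 2) * (a2 n p v * b2 n p w) := by ring
      _ = a2 n p v * b2 n p w := by rw [hAS, one_mul]
  have hz1 : (0:ℝ) < lam ^ (4 * m) := zpow_pos hl _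
  have hz2 : (0:ℝ) < lam ^ (-(4 * m)) := zpow_pos hl _
  -- upper bound : 4 * m < M₁
  have hb1 : lam ^ (4 * m) * (ε₁ * δ₂) ≤ 1 := by
    have h1 : lam ^ (4 * m) * (ε₁ * δ₂) ≤ lam ^ (4 * m) * (a2 n p v * b2 n p w) := by
      apply mul_le_mul_of_nonneg_left _ hz1.le
      exact mul_le_mul hεa hδb hδ₂.le (le_trans hε₁.le hεa)
    calc lam ^ (4 * m) * (ε₁ * δ₂) ≤ lam ^ (4 * m) * (a2 n p v * b2 n p w) := h1
      _ = b2 n p v * a2 n p w := eq1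
      _ ≤ 1 := by nlinarith [a2_nonneg (n := n) (p := p) w]
  have hb2 : lam ^ (-(4 * m)) * (ε₂ * δ₁) ≤ 1 := by
    have h1 : lam ^ (-(4 * m)) * (ε₂ * δ₁) ≤ lam ^ (-(4 * m)) * (b2 n p v * a2 n p w) := by
      apply mul_le_mul_of_nonneg_left _ hz2.le
      exact mul_le_mul hεb hδa hδ₁.le (le_trans hε₂.le hεb)
    calc lam ^ (-(4 * m)) * (ε₂ * δ₁) ≤ lam ^ (-(4 * m)) * (b2 n p v * a2 n p w) := h1
      _ = a2 n p v * b2 n p w := eq2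
      _ ≤ 1 := by nlinarith [b2_nonneg (n := n) (p := p) w]
  have hlt1 : lam ^ (4 * m) < lam ^ ((M₁ : ℕ) : ℤ) := by
    have he : (0:ℝ) < ε₁ * δ₂ := mul_pos hε₁ hδ₂
    have h2 : lam ^ (4 * m) ≤ (ε₁ * δ₂)⁻¹ := by
      rw [← one_div, le_div_iff₀ he]
      linarith
    rw [zpow_natCast]
    exact lt_of_le_of_lt h2 hM₁
  have hlt2 : lam ^ (-(4 * m)) < lam ^ ((M₂ : ℕ) : ℤ) := by
    have he : (0:ℝ) < ε₂ * δ₁ := mul_pos hε₂ hδ₁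
    have h2 : lam ^ (-(4 * m)) ≤ (ε₂ * δ₁)⁻¹ := by
      rw [← one_div, le_div_iff₀ he]
      linarith
    rw [zpow_natCast]
    exact lt_of_le_of_lt h2 hM₂
  have hm1 : 4 * m < (M₁ : ℤ) := (zpow_lt_zpow_iff_right₀ hlam).mp hlt1
  have hm2 : -(4 * m) < (M₂ : ℤ) := (zpow_lt_zpow_iff_right₀ hlam).mp hlt2
  rw [Set.mem_Icc]
  omega

/-- The `ℤ`-action `m • v := D_λ^m v / ‖D_λ^m v‖` on `Ω` is well-defined (maps
`Ω` to `Ω` and satisfies the action laws there), free, and properly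
discontinuous. -/
theorem normAct_wellDefined_free_properlyDiscontinuous
    (p q : ℕ) (hp : 1 ≤ p) (hq : 1 ≤ q) (n : ℕ) (hn : n = p + q + 1)
    (lam : ℝ) (hlam : 1 < lam) :
    (∀ (m : ℤ) (v : EuclideanSpace ℝ (Fin (n + 1))), v ∈ Omega n p →
      normAct n p lam m v ∈ Omega n p) ∧
    (∀ v ∈ Omega n p, normAct n p lam 0 v = v) ∧
    (∀ (m₁ m₂ : ℤ) (v : EuclideanSpace ℝ (Fin (n + 1))), v ∈ Omega n p →
      normAct n p lam (m₁ + m₂) v = normAct n p lam m₁ (normAct n p lam m₂ v)) ∧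
    (∀ (m : ℤ) (v : EuclideanSpace ℝ (Fin (n + 1))), v ∈ Omega n p →
      normAct n p lam m v = v → m = 0) ∧
    (∀ K L : Set (EuclideanSpace ℝ (Fin (n + 1))), K ⊆ Omega n p → L ⊆ Omega n p →
      IsCompact K → IsCompact L →
      {m : ℤ | (normAct n p lam m '' K ∩ L).Nonempty}.Finite) := by
  refine ⟨fun m v hv => normAct_mem hlam m hv,
    fun v hv => normAct_zero hv,
    fun m₁ m₂ v hv => normAct_add hlam m₁ m₂ hv,
    fun m v hv h => normAct_free hlam m hv h,
    fun K L hKΩ hLΩ hK hL => properly_disc hlam K L hKΩ hLΩ hK hL⟩
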